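/- For 1 ≤ k ≤ n, the normalized partial Bell polynomial Z_{n,k}(x) := B_{n,k}(w)/n! (with x_i = w_i/i!) evaluated at x_i = (1/2)_{i-1}/i! equals (2n-k-1)! / (2^{2(n-k)} · n! · (n-k)! · (k-1)!), where (a)_m denotes the rising factorial. -/

import Mathlib

open Finset PowerSeries

noncomputable def xc : ℕ → ℝ
  | 0 => 0
  | (j+1) => (Nat.factorial (2*j) : ℝ) / (4^j * (Nat.factorial j : ℝ) * (Nat.factorial (j+1) : ℝ))

lemma cat_fact (j : ℕ) : catalan j * (Nat.factorial j * Nat.factorial (j+1)) = Nat.factorial (2*j) := by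
  have h1 := Nat.choose_mul_factorial_mul_factorial (show j ≤ 2*j by omega)
  rw [show 2*j - j = j from by omega] at h1
  have h2 : (j + 1) * catalan j = (2*j).choose j := by
    rw [succ_mul_catalan_eq_centralBinom]; rfl
  calc catalan j * (Nat.factorial j * Nat.factorial (j+1))
      = ((j+1) * catalan j) * Nat.factorial j * Nat.factorial j := by
        rw [Nat.factorial_succ]; ring
    _ = Nat.factorial (2*j) := by rw [h2]; exact h1

lemma xc_succ (j : ℕ) : xc (j+1) = (catalan j : ℝ) / 4^j := by
  have h := cat_fact j
  have h' : (catalan j : ℝ) * (Nat.factorial j * Nat.factorial (j+1)) = Nat.factorial (2*j) := by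
    exact_mod_cast h
  rw [xc, ← h']
  have : (Nat.factorial j : ℝ) ≠ 0 := by positivity
  have : (Nat.factorial (j+1) : ℝ) ≠ 0 := by positivity
  field_simp

noncomputable def Fc : PowerSeries ℝ := PowerSeries.mk xc

lemma coeff_Fc (n : ℕ) : (PowerSeries.coeff (R := ℝ) n) Fc = xc n := coeff_mk n xc

lemma Fc_sq : Fc * Fc + 4 * PowerSeries.X = 4 * Fc := by
  have hC : (4 : ℝ⟦X⟧) = PowerSeries.C (R := ℝ) 4 := (map_ofNat _ 4).symm
  ext n
  rw [map_add, coeff_mul]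
  simp only [coeff_Fc]
  rw [hC, PowerSeries.coeff_C_mul, PowerSeries.coeff_C_mul, PowerSeries.coeff_X, coeff_Fc]
  rw [Finset.Nat.sum_antidiagonal_eq_sum_range_succ_mk]
  match n with
  | 0 => simp [xc]
  | 1 => simp [xc, Finset.sum_range_succ]
  | (m+2) =>
    simp only [if_neg (by omega : ¬ m + 2 = 1), mul_zero, add_zero]
    rw [Finset.sum_range_succ', Finset.sum_range_succ]
    rw [show m + 2 - (m + 1 + 1) = 0 from by omega]
    simp only [show xc 0 = 0 from rfl, mul_zero, zero_mul, add_zero, zero_add]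
    have key : ∀ i ∈ Finset.range (m+1), xc (i+1) * xc (m + 2 - (i+1))
        = (catalan i * catalan (m - i) : ℝ) / 4^m := by
      intro i hi
      rw [Finset.mem_range] at hi
      rw [show m + 2 - (i+1) = (m - i) + 1 from by omega, xc_succ, xc_succ]
      rw [div_mul_div_comm, ← pow_add, show i + (m - i) = m from by omega]
      try push_cast
      try ring
    rw [Finset.sum_congr rfl key, ← Finset.sum_div, xc_succ]
    rw [show (4:ℝ) * ((catalan (m+1) : ℝ)/4^(m+1)) = (catalan (m+1) : ℝ)/4^m from by
      rw [pow_succ]; field_simp]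
    congr 1
    rw [catalan_succ m]
    push_cast
    rw [← Fin.sum_univ_eq_sum_range (fun i => ((catalan i : ℝ) * (catalan (m - i) : ℝ))) (m+1)]

lemma Fc_pow_rec (k : ℕ) : Fc^(k+2) + 4 * (PowerSeries.X * Fc^k) = 4 * Fc^(k+1) := by
  calc Fc^(k+2) + 4 * (PowerSeries.X * Fc^k) = Fc^k * (Fc * Fc + 4 * PowerSeries.X) := by ring
    _ = Fc^k * (4 * Fc) := by rw [Fc_sq]
    _ = 4 * Fc^(k+1) := by ring

lemma coeff_rec (k n : ℕ) : (PowerSeries.coeff (R := ℝ) (n+1)) (Fc^(k+2))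
    = 4 * (PowerSeries.coeff (R := ℝ) (n+1)) (Fc^(k+1)) - 4 * (PowerSeries.coeff (R := ℝ) n) (Fc^k) := by
  have hC : (4 : ℝ⟦X⟧) = PowerSeries.C (R := ℝ) 4 := (map_ofNat _ 4).symm
  have h := congrArg (PowerSeries.coeff (R := ℝ) (n+1)) (Fc_pow_rec k)
  rw [map_add, hC, PowerSeries.coeff_C_mul, PowerSeries.coeff_C_mul,
    PowerSeries.coeff_succ_X_mul] at h
  linarith

/-- closed form for the coefficients of `Fc^k` -/
lemma coeff_Fc_pow : ∀ k, 1 ≤ k → ∀ n, k ≤ n → (PowerSeries.coeff (R := ℝ) n) (Fc^k)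
    = (k : ℝ) * (Nat.factorial (2*n-k-1) : ℝ) /
      (4^(n-k) * (Nat.factorial n : ℝ) * (Nat.factorial (n-k) : ℝ)) := by
  intro k
  induction k using Nat.strong_induction_on with
  | _ k IH =>
    match k with
    | 0 => intro h; exact absurd h (by omega)
    | 1 =>
      intro _ n hn
      obtain ⟨m, rfl⟩ : ∃ m, n = m + 1 := ⟨n - 1, by omega⟩
      rw [pow_one, coeff_Fc]
      rw [show 2*(m+1)-1-1 = 2*m from by omega, show m+1-1 = m from by omega, xc]
      push_cast
      ring
    | 2 =>
      intro _ n hn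
      obtain ⟨m, rfl⟩ : ∃ m, n = m + 2 := ⟨n - 2, by omega⟩
      have h2 : Fc^2 = 4 * Fc - 4 * PowerSeries.X := by
        have := Fc_sq; rw [pow_two]; linear_combination this
      have hC : (4 : ℝ⟦X⟧) = PowerSeries.C (R := ℝ) 4 := (map_ofNat _ 4).symm
      rw [h2, map_sub, hC, PowerSeries.coeff_C_mul, PowerSeries.coeff_C_mul,
        PowerSeries.coeff_X, if_neg (by omega : ¬ m + 2 = 1), coeff_Fc]
      rw [show (m+2 : ℕ) = (m+1)+1 from rfl, xc]
      rw [show 2*(m+1+1)-2-1 = (2*m+1) from by omega, show m+1+1-2 = m from by omega]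
      have e1 : Nat.factorial (2*(m+1)) = (2*m+2) * Nat.factorial (2*m+1) := Nat.factorial_succ _
      have e2 : Nat.factorial (m+1) = (m+1) * Nat.factorial m := Nat.factorial_succ _
      rw [e1, e2]
      have h1 : (Nat.factorial m : ℝ) ≠ 0 := by positivity
      have h3 : (Nat.factorial (m+1+1) : ℝ) ≠ 0 := by positivity
      have h4 : (4:ℝ)^m ≠ 0 := by positivity
      push_cast
      field_simp
      ring
    | (j+3) =>
      intro _ n hn
      obtain ⟨a, rfl⟩ : ∃ a, n = a + j + 3 := ⟨n - j - 3, by omega⟩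
      have key := coeff_rec (j+1) (a+j+2)
      rw [show (a+j+2)+1 = a+j+3 from rfl, show (j+1)+2 = j+3 from rfl,
        show (j+1)+1 = j+2 from rfl] at key
      have ih1 := IH (j+2) (by omega) (by omega) (a+j+3) (by omega)
      have ih2 := IH (j+1) (by omega) (by omega) (a+j+2) (by omega)
      rw [ih1, ih2] at key
      rw [show (a+j+3 : ℕ) = a+j+3 from rfl] at key ⊢
      rw [key]
      rw [show 2*(a+j+3)-(j+2)-1 = 2*a+j+3 from by omega,
        show (a+j+3)-(j+2) = a+1 from by omega,
        show 2*(a+j+2)-(j+1)-1 = 2*a+j+2 from by omega,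
        show (a+j+2)-(j+1) = a+1 from by omega,
        show 2*(a+j+3)-(j+3)-1 = 2*a+j+2 from by omega,
        show (a+j+3)-(j+3) = a from by omega]
      have e1 : Nat.factorial (2*a+j+3) = (2*a+j+3) * Nat.factorial (2*a+j+2) :=
        Nat.factorial_succ _
      have e2 : Nat.factorial (a+j+3) = (a+j+3) * Nat.factorial (a+j+2) :=
        Nat.factorial_succ _
      have e3 : Nat.factorial (a+1) = (a+1) * Nat.factorial a := Nat.factorial_succ _
      rw [e1, e2, e3]
      have h1 : (Nat.factorial a : ℝ) ≠ 0 := by positivity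
      have h2 : (Nat.factorial (a+j+2) : ℝ) ≠ 0 := by positivity
      have h3 : (Nat.factorial (2*a+j+2) : ℝ) ≠ 0 := by positivity
      have h4 : (4:ℝ)^a ≠ 0 := by positivity
      have h5 : (4:ℝ)^(a+1) ≠ 0 := by positivity
      push_cast
      field_simp
      ring

lemma coeff_pow_congr (n k : ℕ) (f g : ℝ⟦X⟧) (h : ∀ i, i ≤ n → (PowerSeries.coeff (R := ℝ) i) f = (PowerSeries.coeff (R := ℝ) i) g) :
    (PowerSeries.coeff (R := ℝ) n) (f^k) = (PowerSeries.coeff (R := ℝ) n) (g^k) := by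
  rw [PowerSeries.coeff_pow, PowerSeries.coeff_pow]
  refine Finset.sum_congr rfl fun l hl => Finset.prod_congr rfl fun i hi => h _ ?_
  rw [Finset.mem_finsuppAntidiag] at hl
  exact hl.1 ▸ Finset.single_le_sum (fun _ _ => Nat.zero_le _) hi

noncomputable def Pc (n : ℕ) : Polynomial ℝ :=
  ∑ j ∈ Finset.range (n+1), Polynomial.C (xc j) * Polynomial.X ^ j

lemma coeff_Pc (n i : ℕ) (hi : i ≤ n) : (Pc n).coeff i = xc i := by
  rw [Pc, Polynomial.finset_sum_coeff]
  simp only [Polynomial.coeff_C_mul, Polynomial.coeff_X_pow, mul_ite, mul_one, mul_zero]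
  rw [Finset.sum_ite_eq (Finset.range (n+1)) i xc, if_pos (by simp; omega)]

lemma bridge (n k : ℕ) : (PowerSeries.coeff (R := ℝ) n) (Fc^k) = ((Pc n)^k).coeff n := by
  rw [coeff_pow_congr n k Fc ((Pc n : Polynomial ℝ) : ℝ⟦X⟧) ?_]
  · rw [← Polynomial.coe_pow, Polynomial.coeff_coe]
  · intro i hi
    rw [coeff_Fc, Polynomial.coeff_coe, coeff_Pc n i hi]

lemma expand (n k : ℕ) : ((Pc n)^k).coeff n
    = ∑ g ∈ (Finset.piAntidiag (Finset.range (n+1)) k).filter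
        (fun g => ∑ j ∈ Finset.range (n+1), j * g j = n),
      (Nat.multinomial (Finset.range (n+1)) g : ℝ) * ∏ j ∈ Finset.range (n+1), xc j ^ g j := by
  rw [Pc, Finset.sum_pow_eq_sum_piAntidiag]
  rw [Polynomial.finset_sum_coeff]
  rw [Finset.sum_filter]
  refine Finset.sum_congr rfl fun g hg => ?_
  have : ∀ j ∈ Finset.range (n+1), (Polynomial.C (xc j) * Polynomial.X ^ j) ^ g j
      = Polynomial.C (xc j ^ g j) * Polynomial.X ^ (j * g j) := by
    intro j _
    rw [mul_pow, ← Polynomial.C_pow, ← pow_mul]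
  rw [Finset.prod_congr rfl this, Finset.prod_mul_distrib,
    ← map_prod Polynomial.C (fun j => xc j ^ g j) (Finset.range (n+1)),
    Finset.prod_pow_eq_pow_sum, ← Polynomial.C_eq_natCast, ← mul_assoc, ← map_mul,
    Polynomial.coeff_C_mul, Polynomial.coeff_X_pow]
  by_cases hE : ∑ j ∈ Finset.range (n+1), j * g j = n
  · rw [if_pos hE, if_pos hE.symm, mul_one]
  · rw [if_neg hE, if_neg (fun h => hE h.symm), mul_zero]

lemma main_sum (n k : ℕ) :
    (∑ s ∈ (Finset.Iic (fun _ => n : Fin n → ℕ)).filter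
        (fun s => (∑ i, (i.1 + 1) * s i) = n ∧ (∑ i, s i) = k),
      ∏ i : Fin n, (xc (i.1+1)) ^ s i / (Nat.factorial (s i) : ℝ))
    = (PowerSeries.coeff (R := ℝ) n) (Fc^k) / (Nat.factorial k : ℝ) := by
  classical
  rw [bridge, expand]
  rw [show ((Finset.piAntidiag (Finset.range (n+1)) k).filter
        (fun g => ∑ j ∈ Finset.range (n+1), j * g j = n))
      = ((Finset.piAntidiag (Finset.range (n+1)) k).filter
        (fun g => ∑ j ∈ Finset.range (n+1), j * g j = n)).filter (fun g => g 0 = 0)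
      ∪ ((Finset.piAntidiag (Finset.range (n+1)) k).filter
        (fun g => ∑ j ∈ Finset.range (n+1), j * g j = n)).filter (fun g => ¬ g 0 = 0)
      from (Finset.filter_union_filter_not_eq _ _).symm]
  rw [Finset.sum_union (Finset.disjoint_filter_filter_not _ _ _)]
  have hzero : ∀ g ∈ ((Finset.piAntidiag (Finset.range (n+1)) k).filter
        (fun g => ∑ j ∈ Finset.range (n+1), j * g j = n)).filter (fun g => ¬ g 0 = 0),
      (Nat.multinomial (Finset.range (n+1)) g : ℝ) * ∏ j ∈ Finset.range (n+1), xc j ^ g j = 0 := by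
    intro g hg
    rw [Finset.mem_filter] at hg
    have : ∏ j ∈ Finset.range (n+1), xc j ^ g j = 0 :=
      Finset.prod_eq_zero (Finset.mem_range.mpr (by omega : 0 < n+1))
        (by rw [show xc 0 = 0 from rfl, zero_pow hg.2])
    rw [this, mul_zero]
  rw [Finset.sum_congr rfl hzero, Finset.sum_const_zero, add_zero, Finset.sum_div]
  have hsplitN : ∀ f : ℕ → ℕ, ∑ j ∈ Finset.range (n+1), f j
      = (∑ j ∈ Finset.range n, f (j+1)) + f 0 := fun f => Finset.sum_range_succ' f n
  have hsplitR : ∀ f : ℕ → ℝ, ∏ j ∈ Finset.range (n+1), f j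
      = (∏ j ∈ Finset.range n, f (j+1)) * f 0 := fun f => Finset.prod_range_succ' f n
  symm
  refine Finset.sum_nbij' (fun g => fun i : Fin n => g (i.1+1))
    (fun s => fun m => if h : 1 ≤ m ∧ m ≤ n then s ⟨m-1, by omega⟩ else 0)
    ?_ ?_ ?_ ?_ ?_
  · -- maps into the Fin n filter set
    intro g hg
    simp only [Finset.mem_filter, Finset.mem_piAntidiag] at hg
    obtain ⟨⟨⟨hsum, hsupp⟩, hwt⟩, h0⟩ := hg
    have hwt' : (∑ i : Fin n, (i.1+1) * g (i.1+1)) = n := by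
      rw [Fin.sum_univ_eq_sum_range (fun j => (j+1) * g (j+1)) n]
      rw [hsplitN (fun j => j * g j)] at hwt
      simpa using hwt
    have hs' : (∑ i : Fin n, g (i.1+1)) = k := by
      rw [Fin.sum_univ_eq_sum_range (fun j => g (j+1)) n]
      rw [hsplitN g, h0, add_zero] at hsum
      exact hsum
    refine Finset.mem_filter.mpr ⟨Finset.mem_Iic.mpr ?_, hwt', hs'⟩
    intro i
    calc g (i.1+1) ≤ (i.1+1) * g (i.1+1) := Nat.le_mul_of_pos_left _ (by omega)
      _ ≤ ∑ i : Fin n, (i.1+1) * g (i.1+1) :=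
          Finset.single_le_sum (f := fun i : Fin n => (i.1+1) * g (i.1+1))
            (fun _ _ => Nat.zero_le _) (Finset.mem_univ i)
      _ = n := hwt'
  · -- maps back into piAntidiag filter set
    intro s hs
    simp only [Finset.mem_filter] at hs
    obtain ⟨_, hwt, hsum⟩ := hs
    have hval : ∀ i : Fin n,
        (if h : 1 ≤ i.1+1 ∧ i.1+1 ≤ n then s ⟨i.1+1-1, by omega⟩ else 0) = s i := by
      intro i
      have hi := i.2
      rw [dif_pos ⟨by omega, by omega⟩]
      exact congrArg s (Fin.ext (by simp))
    simp only [Finset.mem_filter, Finset.mem_piAntidiag]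
    refine ⟨⟨⟨?_, ?_⟩, ?_⟩, by norm_num⟩
    · rw [hsplitN, dif_neg (by omega : ¬ (1 ≤ 0 ∧ 0 ≤ n)), add_zero,
        ← Fin.sum_univ_eq_sum_range
          (fun j => if h : 1 ≤ j+1 ∧ j+1 ≤ n then s ⟨j+1-1, by omega⟩ else 0) n,
        Finset.sum_congr rfl (fun i _ => hval i)]
      exact hsum
    · intro m hm
      by_cases h : 1 ≤ m ∧ m ≤ n
      · exact Finset.mem_range.mpr (by omega)
      · rw [dif_neg h] at hm; exact absurd rfl hm
    · rw [hsplitN (fun j => j * (if h : 1 ≤ j ∧ j ≤ n then s ⟨j-1, by omega⟩ else 0))]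
      beta_reduce
      rw [dif_neg (by omega : ¬ (1 ≤ 0 ∧ 0 ≤ n)), mul_zero, add_zero,
        ← Fin.sum_univ_eq_sum_range
          (fun j => (j+1) * (if h : 1 ≤ j+1 ∧ j+1 ≤ n then s ⟨j+1-1, by omega⟩ else 0)) n,
        Finset.sum_congr rfl (fun i (_ : i ∈ Finset.univ) => by rw [hval i])]
      exact hwt
  · -- left inverse
    intro g hg
    simp only [Finset.mem_filter, Finset.mem_piAntidiag] at hg
    obtain ⟨⟨⟨hsum, hsupp⟩, hwt⟩, h0⟩ := hg
    funext m
    dsimp only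
    by_cases h : 1 ≤ m ∧ m ≤ n
    · rw [dif_pos h]
      congr 1
      omega
    · rw [dif_neg h]
      by_cases hm : m = 0
      · rw [hm, h0]
      · by_contra hne
        have := hsupp m (Ne.symm hne)
        rw [Finset.mem_range] at this
        omega
  · -- right inverse
    intro s hs
    funext i
    have hi := i.2
    dsimp only
    rw [dif_pos ⟨by omega, by omega⟩]
    exact congrArg s (Fin.ext (by simp))
  · -- values agree
    intro g hg
    simp only [Finset.mem_filter, Finset.mem_piAntidiag] at hg
    obtain ⟨⟨⟨hsum, hsupp⟩, hwt⟩, h0⟩ := hg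
    have hmult : (Nat.multinomial (Finset.range (n+1)) g : ℝ)
        * ∏ j ∈ Finset.range (n+1), (Nat.factorial (g j) : ℝ) = (Nat.factorial k : ℝ) := by
      rw [← Nat.cast_prod, ← Nat.cast_mul, mul_comm, Nat.multinomial_spec, hsum]
    have hkf : (Nat.factorial k : ℝ) ≠ 0 := by positivity
    dsimp only
    rw [Fin.prod_univ_eq_prod_range
      (fun j => xc (j+1) ^ g (j+1) / (Nat.factorial (g (j+1)) : ℝ)) n]
    rw [div_eq_iff hkf, ← hmult]
    rw [hsplitR (fun j => xc j ^ g j), hsplitR (fun j => (Nat.factorial (g j) : ℝ))]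
    simp only [h0, pow_zero, mul_one, Nat.factorial_zero, Nat.cast_one]
    rw [Finset.prod_div_distrib]
    have hfa' : (∏ j ∈ Finset.range n, (Nat.factorial (g (j+1)) : ℝ)) ≠ 0 := by positivity
    field_simp

lemma prod_half (m : ℕ) : ∏ j ∈ Finset.range m, ((1:ℝ)/2 + j)
    = (Nat.factorial (2*m) : ℝ) / (4^m * (Nat.factorial m : ℝ)) := by
  induction m with
  | zero => simp
  | succ m ih =>
    rw [Finset.prod_range_succ, ih]
    have e1 : Nat.factorial (2*(m+1)) = (2*m+2)*((2*m+1)*Nat.factorial (2*m)) := by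
      rw [show 2*(m+1) = (2*m+1)+1 from by ring, Nat.factorial_succ,
        show (2*m+1) = (2*m)+1 from rfl, Nat.factorial_succ]
    have e2 : Nat.factorial (m+1) = (m+1)*Nat.factorial m := Nat.factorial_succ m
    rw [e1, e2]
    have h1 : (Nat.factorial m : ℝ) ≠ 0 := by positivity
    have h2 : (Nat.factorial (2*m) : ℝ) ≠ 0 := by positivity
    have h3 : (4:ℝ)^m ≠ 0 := by positivity
    push_cast
    field_simp
    ring

theorem Z_at_half_rising_factorial (n k : ℕ) (h1 : 1 ≤ k) (h2 : k ≤ n) :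
    (∑ s ∈ (Finset.Iic (fun _ => n : Fin n → ℕ)).filter
        (fun s => (∑ i, (i.1 + 1) * s i) = n ∧ (∑ i, s i) = k),
      ∏ i, ((∏ j ∈ Finset.range i.1, ((1 : ℝ) / 2 + j)) /
          (Nat.factorial (i.1 + 1) : ℝ)) ^ s i / (Nat.factorial (s i) : ℝ))
    = (Nat.factorial (2 * n - k - 1) : ℝ) /
        ((2 : ℝ) ^ (2 * (n - k)) * (Nat.factorial n : ℝ) *
          (Nat.factorial (n - k) : ℝ) * (Nat.factorial (k - 1) : ℝ)) := by
  have hx : ∀ i : Fin n, ((∏ j ∈ Finset.range i.1, ((1:ℝ)/2 + j)) / (Nat.factorial (i.1+1) : ℝ))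
      = xc (i.1+1) := by
    intro i
    rw [prod_half, xc, div_div, mul_assoc]
  have hcongr : (∑ s ∈ (Finset.Iic (fun _ => n : Fin n → ℕ)).filter
        (fun s => (∑ i, (i.1 + 1) * s i) = n ∧ (∑ i, s i) = k),
      ∏ i, ((∏ j ∈ Finset.range i.1, ((1 : ℝ) / 2 + j)) /
          (Nat.factorial (i.1 + 1) : ℝ)) ^ s i / (Nat.factorial (s i) : ℝ))
      = (∑ s ∈ (Finset.Iic (fun _ => n : Fin n → ℕ)).filter
        (fun s => (∑ i, (i.1 + 1) * s i) = n ∧ (∑ i, s i) = k),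
      ∏ i : Fin n, (xc (i.1+1)) ^ s i / (Nat.factorial (s i) : ℝ)) :=
    Finset.sum_congr rfl fun s _ => Finset.prod_congr rfl fun i _ => by rw [hx i]
  rw [hcongr, main_sum, coeff_Fc_pow k h1 n h2]
  obtain ⟨j, rfl⟩ : ∃ j, k = j + 1 := ⟨k - 1, by omega⟩
  rw [show (2:ℝ)^(2*(n-(j+1))) = 4^(n-(j+1)) from by rw [pow_mul]; norm_num,
    show j+1-1 = j from rfl, Nat.factorial_succ]
  have h1 : (Nat.factorial (n-(j+1)) : ℝ) ≠ 0 := by positivity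
  have h2 : (Nat.factorial n : ℝ) ≠ 0 := by positivity
  have h3 : (Nat.factorial j : ℝ) ≠ 0 := by positivity
  have h4 : (4:ℝ)^(n-(j+1)) ≠ 0 := by positivity
  push_cast
  field_simp
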